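/- For every m ≥ 0 and every x > 0, f₂^m(f₁(x)) < f₁^m(f₂(x)), where f₁(x) = x/(4x+4) and f₂(x) = x/4. -/

import Mathlib

/-- f₁(x) = x/(4x+4) -/
noncomputable def f1 (x : ℝ) : ℝ := x / (4*x + 4)

/-- f₂(x) = x/4 -/
noncomputable def f2 (x : ℝ) : ℝ := x / 4

lemma f1_pos {x : ℝ} (hx : 0 < x) : 0 < f1 x := by
  unfold f1; positivity

lemma f2_iter (m : ℕ) (y : ℝ) : f2^[m] y = y / 4^m := by
  induction m with
  | zero => simp
  | succ n ih =>
      rw [Function.iterate_succ_apply', ih]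
      unfold f2
      rw [pow_succ]
      ring

lemma f1_iter (m : ℕ) (x : ℝ) (hx : 0 < x) :
    f1^[m] x = 3*x / (4*(4^m-1)*x + 3*4^m) := by
  induction m with
  | zero => simp
  | succ n ih =>
      rw [Function.iterate_succ_apply', ih]
      unfold f1
      have h4 : (0:ℝ) < 4^n := by positivity
      have hd : 4*((4:ℝ)^n-1)*x + 3*4^n ≠ 0 := by
        have : (0:ℝ) < 4*(4^n-1)*x + 3*4^n := by
          have h1 : (1:ℝ) ≤ 4^n := one_le_pow₀ (by norm_num)
          nlinarith
        linarith
      have hd2 : 4*(3*x / (4*(4^n-1)*x + 3*4^n)) + 4 ≠ 0 := by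
        have hp : 0 < 3*x / (4*(4^n-1)*x + 3*4^n) := by
          have h1 : (1:ℝ) ≤ 4^n := one_le_pow₀ (by norm_num)
          have : (0:ℝ) < 4*(4^n-1)*x + 3*4^n := by nlinarith
          positivity
        linarith
      have hd3 : 4*((4:ℝ)^(n+1)-1)*x + 3*4^(n+1) ≠ 0 := by
        have h1 : (1:ℝ) ≤ 4^(n+1) := one_le_pow₀ (by norm_num)
        have : (0:ℝ) < 4*(4^(n+1)-1)*x + 3*4^(n+1) := by nlinarith
        linarith
      have e : 4*(3*x / (4*(4^n-1)*x + 3*4^n)) + 4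
          = (12*x + 4*(4*((4:ℝ)^n-1)*x + 3*4^n)) / (4*((4:ℝ)^n-1)*x + 3*4^n) := by
        rw [mul_div_assoc', div_add' _ _ _ hd]
        ring
      rw [e, div_div_div_cancel_right₀ hd]
      congr 1
      ring

theorem key_inequality (m : ℕ) (x : ℝ) (hx : 0 < x) :
    f2^[m] (f1 x) < f1^[m] (f2 x) := by
  have hf2 : 0 < f2 x := by unfold f2; positivity
  rw [f2_iter, f1_iter m _ hf2]
  unfold f1 f2
  have h4 : (0:ℝ) < 4^m := by positivity
  have h1 : (1:ℝ) ≤ 4^m := one_le_pow₀ (by norm_num)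
  rw [div_div, div_lt_div_iff₀ (by positivity) (by nlinarith)]
  nlinarith [mul_pos (mul_pos hx hx) h4]
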